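/- Let f(x), g(x) be polynomials in ℤ[x] with g(x) primitive and deg g ≥ 1, such that for every integer k with g(k) ≠ 0, g(k) divides f(k) in ℤ. Then g(x) divides f(x) in ℤ[x]. -/

import Mathlib

open Polynomial

theorem int_primitive_dvd (f g : Polynomial ℤ) (hg : g.IsPrimitive) (hdeg : 1 ≤ g.degree)
    (h : ∀ k : ℤ, g.eval k ≠ 0 → g.eval k ∣ f.eval k) : g ∣ f := by
  classical
  -- work in ℚ[X]
  set ι : ℤ →+* ℚ := Int.castRingHom ℚ with hιdef
  have hι : Function.Injective ι := Int.cast_injective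
  set fq : ℚ[X] := f.map ι with hfq
  set gq : ℚ[X] := g.map ι with hgq
  have hgqdeg : gq.degree = g.degree := degree_map_eq_of_injective hι g
  have hgq0 : gq ≠ 0 := by
    intro h0
    rw [h0, degree_zero] at hgqdeg
    rw [← hgqdeg] at hdeg
    simp at hdeg
  -- monicize gq
  set c : ℚ := gq.leadingCoeff with hc
  have hc0 : c ≠ 0 := leadingCoeff_ne_zero.mpr hgq0
  set gm : ℚ[X] := gq * C c⁻¹ with hgm
  have hgm_monic : gm.Monic := monic_mul_leadingCoeff_inv hgq0
  set q : ℚ[X] := C c⁻¹ * (fq /ₘ gm) with hq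
  set rem : ℚ[X] := fq %ₘ gm with hrem
  have hdiv : fq = gq * q + rem := by
    rw [hq, hrem, ← mul_assoc, ← hgm, add_comm]
    exact (modByMonic_add_div fq gm).symm
  have hrem_deg : rem.degree < g.degree := by
    have h1 : rem.degree < gm.degree := degree_modByMonic_lt fq hgm_monic
    have h2 : gm.degree = gq.degree := by
      rw [hgm, degree_mul, degree_C (inv_ne_zero hc0), add_zero]
    rw [h2, hgqdeg] at h1
    exact h1
  -- clear denominators of q
  obtain ⟨⟨b, hb⟩, hbq⟩ := IsLocalization.integerNormalization_map_to_map
    (nonZeroDivisors ℤ) q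
  have hb0 : b ≠ 0 := nonZeroDivisors.ne_zero hb
  set q' : ℤ[X] := IsLocalization.integerNormalization (nonZeroDivisors ℤ) q with hq'def
  have hbq' : q'.map ι = C (b : ℚ) * q := by
    have : q'.map (algebraMap ℤ ℚ) = (b : ℤ) • q := hbq
    rw [algebraMap_int_eq] at this
    rw [← hιdef] at this
    rw [this, zsmul_eq_mul]
    norm_cast
  set r' : ℤ[X] := C b * f - g * q' with hr'
  have hr'map : r'.map ι = C (b : ℚ) * rem := by
    rw [hr', Polynomial.map_sub, Polynomial.map_mul, Polynomial.map_mul, hbq',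
      Polynomial.map_C, ← hfq, ← hgq, hdiv, eq_intCast ι b]
    ring
  -- r' has degree < degree g
  have hr'deg : r'.degree < g.degree := by
    have hd : r'.degree = (r'.map ι).degree := (degree_map_eq_of_injective hι r').symm
    rw [hd, hr'map]
    calc (C (b:ℚ) * rem).degree ≤ (C (b:ℚ)).degree + rem.degree := degree_mul_le _ _
      _ ≤ 0 + rem.degree := by gcongr; exact degree_C_le
      _ = rem.degree := zero_add _
      _ < g.degree := hrem_deg
  -- g(k) divides r'(k) whenever g(k) ≠ 0
  have hdvd : ∀ k : ℤ, g.eval k ≠ 0 → g.eval k ∣ r'.eval k := by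
    intro k hk
    rw [hr']
    simp only [eval_sub, eval_mul, eval_C]
    exact dvd_sub ((h k hk).mul_left b) (Dvd.intro _ rfl)
  -- analytic step: r' = 0
  have hr'0 : r' = 0 := by
    by_contra hne
    set ρ : ℤ →+* ℝ := Int.castRingHom ℝ with hρdef
    have hρ : Function.Injective ρ := Int.cast_injective
    set R : ℝ[X] := r'.map ρ with hR
    set G : ℝ[X] := g.map ρ with hG
    have hGdeg : 0 < G.degree := by
      rw [hG, degree_map_eq_of_injective hρ]
      exact lt_of_lt_of_le (by norm_num) hdeg
    have hRGdeg : R.degree < G.degree := by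
      rw [hR, hG, degree_map_eq_of_injective hρ, degree_map_eq_of_injective hρ]
      exact hr'deg
    have h1 := Polynomial.abs_tendsto_atTop G hGdeg
    have h2 := Polynomial.div_tendsto_zero_of_degree_lt R G hRGdeg
    have h2' : ∀ᶠ x in Filter.atTop, |R.eval x / G.eval x| < 1 := by
      have h2a := h2.abs
      rw [abs_zero] at h2a
      exact h2a.eventually_lt_const one_pos
    have h1' : ∀ᶠ x in Filter.atTop, 1 ≤ |G.eval x| := h1.eventually_ge_atTop 1
    have h3 : ∀ᶠ x in Filter.atTop, 1 ≤ |G.eval x| ∧ |R.eval x| < |G.eval x| := by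
      filter_upwards [h1', h2'] with x hx1 hx2
      refine ⟨hx1, ?_⟩
      have hGx : G.eval x ≠ 0 := by
        intro h0; rw [h0, abs_zero] at hx1; linarith
      rwa [abs_div, div_lt_one (abs_pos.mpr hGx)] at hx2
    obtain ⟨M, hM⟩ := Filter.eventually_atTop.mp h3
    have hroots : Set.Ici (⌈M⌉ : ℤ) ⊆ {x | r'.IsRoot x} := by
      intro k hk
      have hkM : M ≤ (k : ℝ) := le_trans (Int.le_ceil M) (by exact_mod_cast hk)
      obtain ⟨hG1, hRG⟩ := hM (k : ℝ) hkM
      have hGk : G.eval (k : ℝ) = ((g.eval k : ℤ) : ℝ) := by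
        rw [hG, eval_map]
        exact eval₂_at_apply ρ k
      have hRk : R.eval (k : ℝ) = ((r'.eval k : ℤ) : ℝ) := by
        rw [hR, eval_map]
        exact eval₂_at_apply ρ k
      have hgk0 : g.eval k ≠ 0 := by
        intro h0
        rw [hGk, h0] at hG1; norm_num at hG1
      have habs : |r'.eval k| < |g.eval k| := by
        rw [hGk, hRk, ← Int.cast_abs, ← Int.cast_abs] at hRG
        exact_mod_cast hRG
      have hd := hdvd k hgk0
      show r'.eval k = 0
      by_contra hrk
      have : |g.eval k| ≤ |r'.eval k| :=
        Int.le_of_dvd (abs_pos.mpr hrk) ((abs_dvd _ _).mpr ((dvd_abs _ _).mpr hd))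
      omega
    exact hne (r'.eq_zero_of_infinite_isRoot ((Set.Ici_infinite _).mono hroots))
  -- conclude: C b * f = g * q'
  have hkey : f * C b = g * q' := by
    have h2 : C b * f - g * q' = 0 := hr'0
    have h3 : C b * f = g * q' := sub_eq_zero.mp h2
    rw [← h3, mul_comm]
  -- remove the constant using primitivity
  by_cases hf : f = 0
  · rw [hf]; exact dvd_zero g
  have hCb : (C b : ℤ[X]) ≠ 0 := by simpa using hb0
  have hmul0 : f * C b ≠ 0 := mul_ne_zero hf hCb
  have hgdvd : g ∣ f * C b := ⟨q', hkey⟩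
  rw [← hg.dvd_primPart_iff_dvd hmul0, primPart_mul hmul0] at hgdvd
  obtain ⟨u, hu⟩ := isUnit_primPart_C b
  rw [← hu] at hgdvd
  exact ((Units.dvd_mul_right).mp hgdvd).trans f.primPart_dvd
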